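/- Let F ∈ S_{G,Λ} and E ∈ E(S_{G,Λ}). Then E ≤ F in the natural partial order if and only if for every (μ,e_G,μ) ∈ E there exists a (unique) triple of the form (ξ,g,ξ) ∈ F such that {(μ,e_G,μ)} ≤ {(ξ,g,ξ)}. -/

import Mathlib

/-- A `k`-graph: a countable small category with degree functor to `ℕ^k`
satisfying the unique factorization property.  Objects (vertices) are
identified with the paths of degree `0`. -/
structure KGraph (k : ℕ) where
  Path : Type
  countable : Countable Path
  src : Path → Path
  rng : Path → Path
  deg : Path → Fin k → ℕ
  comp : (μ ν : Path) → src μ = rng ν → Path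
  deg_src : ∀ μ, deg (src μ) = 0
  deg_rng : ∀ μ, deg (rng μ) = 0
  src_vtx : ∀ μ, deg μ = 0 → src μ = μ
  rng_vtx : ∀ μ, deg μ = 0 → rng μ = μ
  src_comp : ∀ μ ν h, src (comp μ ν h) = src ν
  rng_comp : ∀ μ ν h, rng (comp μ ν h) = rng μ
  deg_comp : ∀ μ ν h, deg (comp μ ν h) = deg μ + deg ν
  comp_assoc : ∀ μ ν ρ (h1 : src μ = rng ν) (h2 : src (comp μ ν h1) = rng ρ)
    (h3 : src ν = rng ρ) (h4 : src μ = rng (comp ν ρ h3)),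
    comp (comp μ ν h1) ρ h2 = comp μ (comp ν ρ h3) h4
  rng_id_comp : ∀ μ (h : src (rng μ) = rng μ), comp (rng μ) μ h = μ
  comp_src_id : ∀ μ (h : src μ = rng (src μ)), comp μ (src μ) h = μ
  factor : ∀ μ (m n : Fin k → ℕ), deg μ = m + n →
    ∃! p : Path × Path, ∃ h : src p.1 = rng p.2,
      deg p.1 = m ∧ deg p.2 = n ∧ comp p.1 p.2 h = μ

namespace KGraph

variable {k : ℕ}

/-- The set `Λ^min(μ,ν)` of pairs `(α,β)` with `μα = νβ` a minimal common
extension of `μ` and `ν`. -/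
def lmin (Λ : KGraph k) (μ ν : Λ.Path) : Set (Λ.Path × Λ.Path) :=
  {p | ∃ (h1 : Λ.src μ = Λ.rng p.1) (h2 : Λ.src ν = Λ.rng p.2),
    Λ.comp μ p.1 h1 = Λ.comp ν p.2 h2 ∧
    Λ.deg μ + Λ.deg p.1 = Λ.deg μ ⊔ Λ.deg ν}

/-- `Λ` is finitely aligned when every `Λ^min(μ,ν)` is finite. -/
def FinitelyAligned (Λ : KGraph k) : Prop := ∀ μ ν : Λ.Path, (Λ.lmin μ ν).Finite

/-- `X ⊆ vΛ` is exhaustive: every path with range `v` has a minimal common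
extension with some member of `X`. -/
def Exhaustive (Λ : KGraph k) (v : Λ.Path) (X : Set Λ.Path) : Prop :=
  ∀ lam : Λ.Path, Λ.rng lam = v → ∃ τ ∈ X, Λ.lmin lam τ ≠ ∅

/-- `Λ` is row finite: finitely many edges of each colour into each vertex. -/
def RowFinite (Λ : KGraph k) : Prop :=
  ∀ v : Λ.Path, Λ.deg v = 0 → ∀ i : Fin k,
    {e : Λ.Path | Λ.deg e = Pi.single i 1 ∧ Λ.rng e = v}.Finite

/-- `Λ` has no sources: every vertex receives an edge of each colour. -/
def NoSources (Λ : KGraph k) : Prop :=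
  ∀ v : Λ.Path, Λ.deg v = 0 → ∀ i : Fin k,
    {e : Λ.Path | Λ.deg e = Pi.single i 1 ∧ Λ.rng e = v}.Nonempty

end KGraph

/-- A self-similar `k`-graph `(G,Λ,φ)`. -/
structure SelfSimilar (k : ℕ) (G : Type) [Group G] (Λ : KGraph k) where
  act : G → Λ.Path → Λ.Path
  φ : G → Λ.Path → G
  act_one : ∀ μ, act 1 μ = μ
  act_mul : ∀ g h μ, act (g * h) μ = act g (act h μ)
  deg_act : ∀ g μ, Λ.deg (act g μ) = Λ.deg μ
  src_act : ∀ g μ, Λ.src (act g μ) = act g (Λ.src μ)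
  rng_act : ∀ g μ, Λ.rng (act g μ) = act g (Λ.rng μ)
  φ_mul : ∀ g h μ, φ (g * h) μ = φ g (act h μ) * φ h μ
  act_comp : ∀ g μ ν (h : Λ.src μ = Λ.rng ν)
      (h' : Λ.src (act g μ) = Λ.rng (act (φ g μ) ν)),
      act g (Λ.comp μ ν h) = Λ.comp (act g μ) (act (φ g μ) ν) h'
  φ_comp : ∀ g μ ν (h : Λ.src μ = Λ.rng ν),
      φ g (Λ.comp μ ν h) = φ (φ g μ) ν
  φ_vtx : ∀ g v, Λ.deg v = 0 → φ g v = g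

variable {k : ℕ} {G : Type} [Group G] {Λ : KGraph k}

/-- Orthogonality of two triples: `Λ^min(μ,ξ) = Λ^min(ν,η) = ∅`. -/
def Orth (Λ : KGraph k) (t u : Λ.Path × G × Λ.Path) : Prop :=
  Λ.lmin t.1 u.1 = ∅ ∧ Λ.lmin t.2.2 u.2.2 = ∅

/-- Membership in `S_{G,Λ}`: a finite set of pairwise orthogonal triples
`(μ,g,ν)` with `s(μ) = g⬝s(ν)`. -/
def IsElem (SS : SelfSimilar k G Λ) (F : Set (Λ.Path × G × Λ.Path)) : Prop :=
  F.Finite ∧ (∀ t ∈ F, Λ.src t.1 = SS.act t.2.1 (Λ.src t.2.2)) ∧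
    ∀ t ∈ F, ∀ u ∈ F, t ≠ u → Orth Λ t u

/-- The multiplication of `S_{G,Λ}`. -/
def smul (SS : SelfSimilar k G Λ) (E F : Set (Λ.Path × G × Λ.Path)) :
    Set (Λ.Path × G × Λ.Path) :=
  {t | ∃ μ g ν ξ h η α β, (μ, g, ν) ∈ E ∧ (ξ, h, η) ∈ F ∧ (α, β) ∈ Λ.lmin ν ξ ∧
    ∃ (h1 : Λ.src μ = Λ.rng (SS.act g α)) (h2 : Λ.src η = Λ.rng (SS.act h⁻¹ β)),
      t = (Λ.comp μ (SS.act g α) h1,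
           SS.φ g α * SS.φ h (SS.act h⁻¹ β),
           Λ.comp η (SS.act h⁻¹ β) h2)}

/-- The involution `F* = {(ν,g⁻¹,μ) : (μ,g,ν) ∈ F}`. -/
def sstar (F : Set (Λ.Path × G × Λ.Path)) : Set (Λ.Path × G × Λ.Path) :=
  {t | (t.2.2, t.2.1⁻¹, t.1) ∈ F}

/-- The singleton idempotent `ι_μ = {(μ,e_G,μ)}`. -/
def iota (Λ : KGraph k) (G : Type) [Group G] (μ : Λ.Path) :
    Set (Λ.Path × G × Λ.Path) := {(μ, (1 : G), μ)}

/-- Idempotents of `S_{G,Λ}`. -/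
def IsIdem (SS : SelfSimilar k G Λ) (E : Set (Λ.Path × G × Λ.Path)) : Prop :=
  IsElem SS E ∧ smul SS E E = E

/-- The natural partial order of the inverse semigroup `S_{G,Λ}`:
`s ≤ t` iff `s = te` for some idempotent `e`. -/
def leS (SS : SelfSimilar k G Λ) (s t : Set (Λ.Path × G × Λ.Path)) : Prop :=
  ∃ E, IsIdem SS E ∧ smul SS t E = s

/-- `τ` is strongly fixed by `g`. -/
def StronglyFixed (SS : SelfSimilar k G Λ) (g : G) (τ : Λ.Path) : Prop :=
  SS.act g τ = τ ∧ SS.φ g τ = 1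

/-- The set `SF_g` of paths strongly fixed by `g`. -/
def SFg (SS : SelfSimilar k G Λ) (g : G) : Set Λ.Path :=
  {τ | SS.act g τ = τ ∧ SS.φ g τ = 1}

/-- `SF_g` is locally exhausted. -/
def LocallyExhausted (SS : SelfSimilar k G Λ) (g : G) : Prop :=
  ∀ v : Λ.Path, Λ.deg v = 0 →
    ∃ M : Set Λ.Path, M.Finite ∧ (∀ τ ∈ M, τ ∈ SFg SS g ∧ Λ.rng τ = v) ∧
      ∀ τ ∈ SFg SS g, Λ.rng τ = v → ∃ τ' ∈ M, Λ.lmin τ τ' ≠ ∅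

/-- The principal ideal `J_F` admits a finite cover. -/
def HasFiniteCover (SS : SelfSimilar k G Λ) (F : Set (Λ.Path × G × Λ.Path)) : Prop :=
  ∃ C : Set (Set (Λ.Path × G × Λ.Path)), C.Finite ∧
    (∀ E ∈ C, IsIdem SS E ∧ smul SS F E = E) ∧
    ∀ E, IsIdem SS E → smul SS F E = E → E ≠ ∅ → ∃ E' ∈ C, smul SS E E' ≠ ∅

/-- A (proper, nonzero) filter in the idempotent semilattice `E(S_{G,Λ})`. -/
def IsFilterE (SS : SelfSimilar k G Λ) (𝓕 : Set (Set (Λ.Path × G × Λ.Path))) : Prop :=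
  𝓕.Nonempty ∧ (∀ E ∈ 𝓕, IsIdem SS E) ∧ (∅ ∉ 𝓕) ∧
    (∀ E ∈ 𝓕, ∀ F ∈ 𝓕, smul SS E F ∈ 𝓕) ∧
    ∀ E ∈ 𝓕, ∀ F, IsIdem SS F → smul SS F E = E → F ∈ 𝓕

/-- An ultrafilter: a maximal filter in `E(S_{G,Λ})`. -/
def IsUltrafilterE (SS : SelfSimilar k G Λ) (𝓕 : Set (Set (Λ.Path × G × Λ.Path))) : Prop :=
  IsFilterE SS 𝓕 ∧ ∀ 𝓖, IsFilterE SS 𝓖 → 𝓕 ⊆ 𝓖 → 𝓖 = 𝓕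

/-- `n ≤ m` for `m ∈ (ℕ ∪ {∞})^k` and `n ∈ ℕ^k`. -/
def LeDeg {k : ℕ} (m : Fin k → ℕ∞) (n : Fin k → ℕ) : Prop :=
  ∀ i, (n i : ℕ∞) ≤ m i

/-- A boundary path `x` of a finitely aligned `k`-graph, recorded via its
degree `d(x) ∈ (ℕ∪{∞})^k` and its initial segments `x(0,n)` for `n ≤ d(x)`. -/
structure BoundaryPath (Λ : KGraph k) where
  bdeg : Fin k → ℕ∞
  seg : (Fin k → ℕ) → Λ.Path
  deg_seg : ∀ n, LeDeg bdeg n → Λ.deg (seg n) = n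
  rng_seg : ∀ n, LeDeg bdeg n → Λ.rng (seg n) = seg 0
  seg_comp : ∀ m n : Fin k → ℕ, LeDeg bdeg (m + n) →
    ∃ (τ : Λ.Path) (h : Λ.src (seg m) = Λ.rng τ),
      Λ.deg τ = n ∧ seg (m + n) = Λ.comp (seg m) τ h
  seg_junk : ∀ n, ¬ LeDeg bdeg n → seg n = seg 0
  boundary : ∀ n, LeDeg bdeg n → ∀ X : Set Λ.Path, X.Finite →
    (∀ τ ∈ X, Λ.rng τ = Λ.src (seg n) ∧ τ ≠ Λ.src (seg n)) →
    KGraph.Exhaustive Λ (Λ.src (seg n)) X →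
    ∃ τ ∈ X, ∃ (_ : LeDeg bdeg (n + Λ.deg τ)) (h : Λ.src (seg n) = Λ.rng τ),
      seg (n + Λ.deg τ) = Λ.comp (seg n) τ h

/-- `z = σ^n(x)`, the shift of the boundary path `x` by `n`. -/
def IsShift (Λ : KGraph k) (x : BoundaryPath Λ) (n : Fin k → ℕ)
    (z : BoundaryPath Λ) : Prop :=
  (∀ i, z.bdeg i = x.bdeg i - (n i : ℕ∞)) ∧
    ∀ p, LeDeg z.bdeg p → ∃ h : Λ.src (x.seg n) = Λ.rng (z.seg p),
      x.seg (n + p) = Λ.comp (x.seg n) (z.seg p) h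

/-- `z = g⬝x` for boundary paths. -/
def IsActB (SS : SelfSimilar k G Λ) (g : G) (x z : BoundaryPath Λ) : Prop :=
  z.bdeg = x.bdeg ∧ ∀ p, LeDeg x.bdeg p → z.seg p = SS.act g (x.seg p)

/-- `y = lam⬝z`, the concatenation of a finite path with a boundary path. -/
def IsCompB (Λ : KGraph k) (lam : Λ.Path) (z y : BoundaryPath Λ) : Prop :=
  (∀ i, y.bdeg i = (Λ.deg lam i : ℕ∞) + z.bdeg i) ∧
    ∀ p, LeDeg z.bdeg p → ∃ h : Λ.src lam = Λ.rng (z.seg p),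
      y.seg (Λ.deg lam + p) = Λ.comp lam (z.seg p) h

/-- `x ∈ Z(lam)`, i.e. `x(0,d(lam)) = lam`. -/
def InZ (Λ : KGraph k) (x : BoundaryPath Λ) (lam : Λ.Path) : Prop :=
  LeDeg x.bdeg (Λ.deg lam) ∧ x.seg (Λ.deg lam) = lam

/-- `y` is a fixed point for `θ_{{(μ,g,ν)}}`: `y ∈ Z(ν)` and `μ(g⬝σ^{d(ν)}(y)) = y`. -/
def FixedPt (SS : SelfSimilar k G Λ) (μ : Λ.Path) (g : G) (ν : Λ.Path)
    (y : BoundaryPath Λ) : Prop :=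
  InZ Λ y ν ∧ ∃ z w, IsShift Λ y (Λ.deg ν) z ∧ IsActB SS g z w ∧ IsCompB Λ μ w y

/-- `y` is an interior fixed point for `θ_{{(μ,g,ν)}}`: some cylinder containing
`y` consists entirely of fixed points. -/
def InteriorFixedPt (SS : SelfSimilar k G Λ) (μ : Λ.Path) (g : G) (ν : Λ.Path)
    (y : BoundaryPath Λ) : Prop :=
  ∃ η : Λ.Path, InZ Λ y η ∧ ∀ y', InZ Λ y' η → FixedPt SS μ g ν y'

/-- `G`-aperiodic condition (A). -/
def CondA (SS : SelfSimilar k G Λ) : Prop :=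
  ∀ v : Λ.Path, Λ.deg v = 0 → ∃ x : BoundaryPath Λ, x.seg 0 = v ∧
    ∀ (m n : Fin k → ℕ), LeDeg x.bdeg m → LeDeg x.bdeg n →
      ∀ (g : G) (z w : BoundaryPath Λ),
        IsShift Λ x m z → IsShift Λ x n w → IsActB SS g w z → m = n

/-- `(G,Λ)` is `G`-cofinal. -/
def GCofinal (SS : SelfSimilar k G Λ) : Prop :=
  ∀ v : Λ.Path, Λ.deg v = 0 → ∀ x : BoundaryPath Λ,
    ∃ n : Fin k → ℕ, LeDeg x.bdeg n ∧ ∃ (g : G) (p : Λ.Path),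
      Λ.rng p = v ∧ Λ.src p = SS.act g (Λ.src (x.seg n))

/-- The ultrafilter `F_x` associated to a boundary path `x`. -/
def Fx (SS : SelfSimilar k G Λ) (x : BoundaryPath Λ) :
    Set (Set (Λ.Path × G × Λ.Path)) :=
  {E | IsIdem SS E ∧ ∃ n : Fin k → ℕ, LeDeg x.bdeg n ∧
    (x.seg n, (1 : G), x.seg n) ∈ E}

section Helpers

lemma phi_one (SS : SelfSimilar k G Λ) (μ : Λ.Path) : SS.φ 1 μ = 1 := by
  have h := SS.φ_mul 1 1 μ
  rw [one_mul, SS.act_one] at h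
  exact right_eq_mul.mp h

lemma vtx_eq {α v : Λ.Path} (hd : Λ.deg α = 0) (h : Λ.rng α = v) : α = v :=
  (Λ.rng_vtx α hd).symm.trans h

lemma comp_congr {μ ν α β : Λ.Path} (e1 : μ = ν) (e2 : α = β)
    (h : Λ.src μ = Λ.rng α) (h' : Λ.src ν = Λ.rng β) :
    Λ.comp μ α h = Λ.comp ν β h' := by subst e1; subst e2; rfl

lemma comp_vtx (μ α : Λ.Path) (hd : Λ.deg α = 0) (h : Λ.src μ = Λ.rng α) :
    Λ.comp μ α h = μ := by
  have e : α = Λ.src μ := vtx_eq hd h.symm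
  have h' : Λ.src μ = Λ.rng (Λ.src μ) := e ▸ h
  exact (comp_congr rfl e h h').trans (Λ.comp_src_id μ h')

lemma comp_inj {μ ν α β : Λ.Path} {h : Λ.src μ = Λ.rng α} {h' : Λ.src ν = Λ.rng β}
    (hdeg : Λ.deg μ = Λ.deg ν) (heq : Λ.comp μ α h = Λ.comp ν β h') : μ = ν ∧ α = β := by
  obtain ⟨p, -, hu⟩ := Λ.factor (Λ.comp μ α h) (Λ.deg μ) (Λ.deg α) (Λ.deg_comp μ α h)
  have hdβ : Λ.deg β = Λ.deg α := by
    have h2 := Λ.deg_comp ν β h'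
    rw [← heq, Λ.deg_comp, hdeg] at h2
    exact (add_left_cancel h2).symm
  have e1 := hu (μ, α) ⟨h, rfl, rfl, rfl⟩
  have e2 := hu (ν, β) ⟨h', hdeg.symm, hdβ, heq.symm⟩
  exact ⟨congrArg Prod.fst (e1.trans e2.symm), congrArg Prod.snd (e1.trans e2.symm)⟩

lemma src_mem_lmin_self (μ : Λ.Path) : (Λ.src μ, Λ.src μ) ∈ Λ.lmin μ μ := by
  have h : Λ.src μ = Λ.rng (Λ.src μ) := (Λ.rng_vtx _ (Λ.deg_src μ)).symm
  exact ⟨h, h, rfl, by rw [Λ.deg_src, add_zero, sup_idem]⟩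

lemma mem_lmin_self {μ α β : Λ.Path} (hm : (α, β) ∈ Λ.lmin μ μ) :
    α = Λ.src μ ∧ β = Λ.src μ := by
  obtain ⟨h1, h2, heq, hd⟩ := hm
  have hαβ : α = β := (comp_inj rfl heq).2
  have hα : Λ.deg α = 0 := by
    rw [sup_idem] at hd
    have : Λ.deg μ + Λ.deg α = Λ.deg μ + 0 := by rw [hd, add_zero]
    exact add_left_cancel this
  have e : α = Λ.src μ := vtx_eq hα h1.symm
  exact ⟨e, hαβ ▸ e⟩

end Helpers

lemma prefix_of_comp {ζ η : Λ.Path} (hz : Λ.src ζ = Λ.rng η) {s : Fin k → ℕ}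
    (hles : Λ.deg ζ ≤ s) {ρ σ : Λ.Path} (hdρ : Λ.deg ρ = s)
    (hρσ : Λ.src ρ = Λ.rng σ) (hcomp : Λ.comp ρ σ hρσ = Λ.comp ζ η hz) :
    ∃ (c : Λ.Path) (hc : Λ.src ζ = Λ.rng c),
      Λ.deg c = s - Λ.deg ζ ∧ Λ.comp ζ c hc = ρ := by
  have hfacρ : Λ.deg ρ = Λ.deg ζ + (s - Λ.deg ζ) := by
    rw [hdρ]; funext i; exact (Nat.add_sub_cancel' (hles i)).symm
  obtain ⟨⟨ζ₁, c⟩, ⟨hζc, hdζ₁, hdc, hcompζ⟩, -⟩ := Λ.factor ρ (Λ.deg ζ) (s - Λ.deg ζ) hfacρ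
  have h3 : Λ.src c = Λ.rng σ := by
    have := Λ.src_comp ζ₁ c hζc
    rw [hcompζ] at this
    rw [← this]; exact hρσ
  have h4 : Λ.src ζ₁ = Λ.rng (Λ.comp c σ h3) := by rw [Λ.rng_comp]; exact hζc
  have hassoc : Λ.comp ζ₁ (Λ.comp c σ h3) h4 = Λ.comp ζ η hz := by
    rw [← Λ.comp_assoc ζ₁ c σ hζc (hcompζ.symm ▸ hρσ) h3 h4]
    rw [← hcomp]
    exact comp_congr hcompζ rfl _ _
  have hinj := comp_inj hdζ₁ hassoc
  obtain ⟨e1, -⟩ := hinj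
  subst e1
  exact ⟨c, hζc, hdc, hcompζ⟩

lemma lmin_nonempty {ξ ξ' a b : Λ.Path} (h1 : Λ.src ξ = Λ.rng a) (h2 : Λ.src ξ' = Λ.rng b)
    (heq : Λ.comp ξ a h1 = Λ.comp ξ' b h2) : (Λ.lmin ξ ξ').Nonempty := by
  set s : Fin k → ℕ := Λ.deg ξ ⊔ Λ.deg ξ' with hs
  have hdχ : Λ.deg (Λ.comp ξ a h1) = Λ.deg ξ + Λ.deg a := Λ.deg_comp ξ a h1
  have hle1 : Λ.deg ξ ≤ Λ.deg (Λ.comp ξ a h1) := by rw [hdχ]; exact le_self_add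
  have hle2 : Λ.deg ξ' ≤ Λ.deg (Λ.comp ξ a h1) := by
    rw [heq, Λ.deg_comp]; exact le_self_add
  have hsle : s ≤ Λ.deg (Λ.comp ξ a h1) := sup_le hle1 hle2
  have hfac : Λ.deg (Λ.comp ξ a h1) = s + (Λ.deg (Λ.comp ξ a h1) - s) := by
    funext i; exact (Nat.add_sub_cancel' (hsle i)).symm
  obtain ⟨⟨ρ, σ⟩, ⟨hρσ, hdρ, hdσ, hcomp⟩, -⟩ :=
    Λ.factor (Λ.comp ξ a h1) s (Λ.deg (Λ.comp ξ a h1) - s) hfac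
  obtain ⟨a₁, ha₁, hda₁, hca₁⟩ := prefix_of_comp h1 le_sup_left hdρ hρσ hcomp
  obtain ⟨b₁, hb₁, hdb₁, hcb₁⟩ := prefix_of_comp h2 le_sup_right hdρ hρσ (hcomp.trans heq)
  refine ⟨(a₁, b₁), ha₁, hb₁, hca₁.trans hcb₁.symm, ?_⟩
  rw [hda₁]
  funext i; exact Nat.add_sub_cancel' ((le_sup_left : Λ.deg ξ ≤ s) i)

lemma diag_of_isIdem (SS : SelfSimilar k G Λ) {E : Set (Λ.Path × G × Λ.Path)}
    (hE : IsIdem SS E) : ∀ t ∈ E, t.2.1 = 1 ∧ t.2.2 = t.1 := by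
  obtain ⟨⟨hfin, hsrc, horth⟩, hmul⟩ := hE
  intro t ht
  have ht' : t ∈ smul SS E E := hmul.symm ▸ ht
  simp only [smul, Set.mem_setOf_eq] at ht'
  obtain ⟨μ, g, ν, ξ, h, η, α, β, h1m, h2m, hab, hc1, hc2, hteq⟩ := ht'
  obtain ⟨ha1, ha2, habeq, habd⟩ := hab
  have ht1eq : t.1 = Λ.comp μ (SS.act g α) hc1 := congrArg Prod.fst hteq
  have ht3eq : t.2.2 = Λ.comp η (SS.act h⁻¹ β) hc2 := congrArg (fun x => x.2.2) hteq
  -- t = (μ, g, ν)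
  have e1 : t = (μ, g, ν) := by
    by_contra hne
    have hem := (horth t ht _ h1m hne).1
    have hmem : (Λ.src t.1, SS.act g α) ∈ Λ.lmin t.1 μ := by
      refine ⟨(Λ.rng_vtx _ (Λ.deg_src _)).symm, hc1, ?_, ?_⟩
      · rw [Λ.comp_src_id]
        exact ht1eq
      · rw [Λ.deg_src, add_zero]
        have : Λ.deg μ ≤ Λ.deg t.1 := by
          rw [ht1eq, Λ.deg_comp]; exact le_self_add
        exact (sup_eq_left.mpr this).symm
    rw [hem] at hmem
    exact hmem
  -- t = (ξ, h, η)
  have e2 : t = (ξ, h, η) := by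
    by_contra hne
    have hem := (horth t ht _ h2m hne).2
    have hmem : (Λ.src t.2.2, SS.act h⁻¹ β) ∈ Λ.lmin t.2.2 η := by
      refine ⟨(Λ.rng_vtx _ (Λ.deg_src _)).symm, hc2, ?_, ?_⟩
      · rw [Λ.comp_src_id]
        exact ht3eq
      · rw [Λ.deg_src, add_zero]
        have : Λ.deg η ≤ Λ.deg t.2.2 := by
          rw [ht3eq, Λ.deg_comp]; exact le_self_add
        exact (sup_eq_left.mpr this).symm
    rw [hem] at hmem
    exact hmem
  obtain ⟨eμ, eg, eν⟩ : μ = ξ ∧ g = h ∧ ν = η := by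
    have := e1.symm.trans e2
    simpa [Prod.mk.injEq] using this
  subst eμ; subst eg; subst eν
  -- now t = (μ, g, ν), with t.1 = comp μ (act g α), t.2.2 = comp ν (act g⁻¹ β)
  have et1 : t.1 = μ := congrArg Prod.fst e1
  have et2 : t.2.1 = g := congrArg (fun x => x.2.1) e1
  have et3 : t.2.2 = ν := congrArg (fun x => x.2.2) e1
  have hμ : Λ.comp μ (SS.act g α) hc1 = μ := ht1eq.symm.trans et1
  have hν : Λ.comp ν (SS.act g⁻¹ β) hc2 = ν := ht3eq.symm.trans et3
  have hdα : Λ.deg α = 0 := by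
    have := Λ.deg_comp μ (SS.act g α) hc1
    rw [hμ, SS.deg_act] at this
    have h0 : Λ.deg μ + Λ.deg α = Λ.deg μ + 0 := by rw [← this, add_zero]
    exact add_left_cancel h0
  have hdβ : Λ.deg β = 0 := by
    have := Λ.deg_comp ν (SS.act g⁻¹ β) hc2
    rw [hν, SS.deg_act] at this
    have h0 : Λ.deg ν + Λ.deg β = Λ.deg ν + 0 := by rw [← this, add_zero]
    exact add_left_cancel h0
  -- ν = μ
  have hνμ : ν = μ := by
    have l1 : Λ.comp ν α ha1 = ν := comp_vtx ν α hdα ha1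
    have l2 : Λ.comp μ β ha2 = μ := comp_vtx μ β hdβ ha2
    rw [l1, l2] at habeq
    exact habeq
  -- g = 1
  have hg : g = 1 := by
    have hmid : t.2.1 = SS.φ g α * SS.φ g (SS.act g⁻¹ β) := congrArg (fun x => x.2.1) hteq
    rw [et2, SS.φ_vtx g α hdα, SS.φ_vtx g _ (by rw [SS.deg_act]; exact hdβ)] at hmid
    exact left_eq_mul.mp hmid
  exact ⟨et2.trans hg, et3.trans (hνμ.trans et1.symm) |>.trans rfl⟩

lemma iota_isIdem (SS : SelfSimilar k G Λ) (μ : Λ.Path) : IsIdem SS (iota Λ G μ) := by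
  constructor
  · refine ⟨Set.finite_singleton _, ?_, ?_⟩
    · intro t ht
      rw [iota, Set.mem_singleton_iff] at ht
      subst ht
      exact (SS.act_one _).symm
    · intro t ht u hu hne
      rw [iota, Set.mem_singleton_iff] at ht hu
      exact absurd (ht.trans hu.symm) hne
  · apply Set.Subset.antisymm
    · rintro u hu
      simp only [smul, Set.mem_setOf_eq] at hu
      obtain ⟨μ₁, g₁, ν₁, ξ₁, h₁, η₁, α, β, hm1, hm2, hab, hc1, hc2, rfl⟩ := hu
      rw [iota, Set.mem_singleton_iff, Prod.mk.injEq, Prod.mk.injEq] at hm1 hm2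
      obtain ⟨rfl, rfl, rfl⟩ := hm1
      obtain ⟨rfl, rfl, rfl⟩ := hm2
      obtain ⟨hα, hβ⟩ := mem_lmin_self hab
      have hdα : Λ.deg (SS.act 1 α) = 0 := by
        rw [SS.deg_act, hα, Λ.deg_src]
      have hdβ : Λ.deg (SS.act 1⁻¹ β) = 0 := by
        rw [SS.deg_act, hβ, Λ.deg_src]
      rw [iota, Set.mem_singleton_iff, Prod.mk.injEq, Prod.mk.injEq]
      refine ⟨comp_vtx _ _ hdα hc1, ?_, comp_vtx _ _ hdβ hc2⟩
      rw [phi_one, phi_one, one_mul]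
    · rintro u hu
      rw [iota, Set.mem_singleton_iff] at hu
      subst hu
      have hv : Λ.src μ = Λ.rng (Λ.src μ) := (Λ.rng_vtx _ (Λ.deg_src μ)).symm
      have hc1 : Λ.src μ = Λ.rng (SS.act 1 (Λ.src μ)) := by rw [SS.act_one]; exact hv
      have hc2 : Λ.src μ = Λ.rng (SS.act 1⁻¹ (Λ.src μ)) := by
        rw [inv_one, SS.act_one]; exact hv
      refine ⟨μ, 1, μ, μ, 1, μ, Λ.src μ, Λ.src μ, rfl, rfl, src_mem_lmin_self μ, hc1, hc2, ?_⟩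
      have hdα : Λ.deg (SS.act 1 (Λ.src μ)) = 0 := by rw [SS.deg_act, Λ.deg_src]
      have hdβ : Λ.deg (SS.act 1⁻¹ (Λ.src μ)) = 0 := by rw [SS.deg_act, Λ.deg_src]
      rw [Prod.mk.injEq, Prod.mk.injEq]
      exact ⟨(comp_vtx _ _ hdα hc1).symm, by rw [phi_one, phi_one, one_mul],
        (comp_vtx _ _ hdβ hc2).symm⟩

lemma leS_iota_iff (SS : SelfSimilar k G Λ) (μ ξ : Λ.Path) (g : G) :
    leS SS (iota Λ G μ) {(ξ, g, ξ)} ↔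
      ∃ τ, ∃ h : Λ.src ξ = Λ.rng τ,
        SS.act g τ = τ ∧ SS.φ g τ = 1 ∧ μ = Λ.comp ξ τ h := by
  constructor
  · rintro ⟨E', hE', hsm⟩
    have hm : (μ, (1:G), μ) ∈ smul SS {(ξ, g, ξ)} E' := by
      rw [hsm]; rfl
    simp only [smul, Set.mem_setOf_eq] at hm
    obtain ⟨μ₁, g₁, ν₁, ξ₁, h₁, η₁, α, β, hm1, hm2, hab, hc1, hc2, hteq⟩ := hm
    rw [Set.mem_singleton_iff, Prod.mk.injEq, Prod.mk.injEq] at hm1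
    obtain ⟨eμ, eg, eν⟩ := hm1
    subst μ₁; subst g₁; subst ν₁
    obtain ⟨hh₁, hηξ⟩ := diag_of_isIdem SS hE' _ hm2
    have hh : h₁ = 1 := hh₁
    have hη : η₁ = ξ₁ := hηξ
    subst h₁; subst η₁
    obtain ⟨ha1, ha2, habeq, habd⟩ := hab
    dsimp only at ha1 ha2 habeq habd
    obtain ⟨e1, e2, e3⟩ : μ = Λ.comp ξ (SS.act g α) hc1 ∧
        (1:G) = SS.φ g α * SS.φ 1 (SS.act 1⁻¹ β) ∧
        μ = Λ.comp ξ₁ (SS.act 1⁻¹ β) hc2 := by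
      simpa [Prod.mk.injEq] using hteq
    have hβ' : SS.act 1⁻¹ β = β := by rw [inv_one, SS.act_one]
    have hc2' : Λ.src ξ₁ = Λ.rng β := by rw [← hβ']; exact hc2
    have e3' : μ = Λ.comp ξ₁ β hc2' := by
      rw [e3]; exact comp_congr rfl hβ' _ _
    have echain : Λ.comp ξ (SS.act g α) hc1 = Λ.comp ξ α ha1 := by
      rw [← e1, e3', habeq]
    have hact : SS.act g α = α := (comp_inj rfl echain).2
    have hφ : SS.φ g α = 1 := by
      rw [phi_one, mul_one] at e2
      exact e2.symm
    exact ⟨α, ha1, hact, hφ, by rw [e1]; exact comp_congr rfl hact _ _⟩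
  · rintro ⟨τ, hτr, hτa, hτφ, rfl⟩
    refine ⟨iota Λ G (Λ.comp ξ τ hτr), iota_isIdem SS _, ?_⟩
    set μ := Λ.comp ξ τ hτr with hμdef
    have hdμ : Λ.deg μ = Λ.deg ξ + Λ.deg τ := Λ.deg_comp ξ τ hτr
    have hξμ : Λ.deg ξ ≤ Λ.deg μ := by rw [hdμ]; exact le_self_add
    apply Set.Subset.antisymm
    · rintro u hu
      simp only [smul, Set.mem_setOf_eq] at hu
      obtain ⟨μ₁, g₁, ν₁, ξ₁, h₁, η₁, α, β, hm1, hm2, hab, hc1, hc2, rfl⟩ := hu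
      rw [Set.mem_singleton_iff, Prod.mk.injEq, Prod.mk.injEq] at hm1
      obtain ⟨eμ, eg, eν⟩ := hm1
      subst μ₁; subst g₁; subst ν₁
      rw [iota, Set.mem_singleton_iff, Prod.mk.injEq, Prod.mk.injEq] at hm2
      obtain ⟨eξ, eh, eη⟩ := hm2
      subst ξ₁; subst h₁; subst η₁
      obtain ⟨ha1, ha2, habeq, habd⟩ := hab
      dsimp only at ha1 ha2 habeq habd
      rw [sup_eq_right.mpr hξμ, hdμ] at habd
      have hdα : Λ.deg α = Λ.deg τ := add_left_cancel habd
      have hdβ : Λ.deg β = 0 := by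
        have := Λ.deg_comp ξ α ha1
        rw [habeq, Λ.deg_comp, hdα, ← hdμ] at this
        have h0 : Λ.deg μ + Λ.deg β = Λ.deg μ + 0 := by rw [add_zero]; exact this
        exact add_left_cancel h0
      have hcμβ : Λ.comp μ β ha2 = μ := comp_vtx μ β hdβ ha2
      have hατ : α = τ := by
        have : Λ.comp ξ α ha1 = Λ.comp ξ τ hτr := by rw [habeq, hcμβ]
        exact (comp_inj rfl this).2
      subst hατ
      rw [iota, Set.mem_singleton_iff, Prod.mk.injEq, Prod.mk.injEq]
      refine ⟨?_, ?_, ?_⟩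
      · exact comp_congr rfl hτa _ hτr
      · rw [hτφ, phi_one, one_mul]
      · exact comp_vtx μ _ (by rw [SS.deg_act]; exact hdβ) hc2
    · rintro u hu
      rw [iota, Set.mem_singleton_iff] at hu
      subst hu
      have hv : Λ.src μ = Λ.rng (Λ.src μ) := (Λ.rng_vtx _ (Λ.deg_src μ)).symm
      have hlm : (τ, Λ.src μ) ∈ Λ.lmin ξ μ := by
        refine ⟨hτr, hv, (Λ.comp_src_id μ hv).symm, ?_⟩
        show Λ.deg ξ + Λ.deg τ = Λ.deg ξ ⊔ Λ.deg μ
        rw [sup_eq_right.mpr hξμ, hdμ]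
      have hc1 : Λ.src ξ = Λ.rng (SS.act g τ) := by rw [hτa]; exact hτr
      have hc2 : Λ.src μ = Λ.rng (SS.act 1⁻¹ (Λ.src μ)) := by
        rw [inv_one, SS.act_one]; exact hv
      refine ⟨ξ, g, ξ, μ, 1, μ, τ, Λ.src μ, rfl, rfl, hlm, hc1, hc2, ?_⟩
      rw [Prod.mk.injEq, Prod.mk.injEq]
      refine ⟨?_, ?_, ?_⟩
      · exact (comp_congr rfl hτa hc1 hτr).symm
      · rw [hτφ, phi_one, one_mul]
      · exact (comp_vtx μ _ (by rw [SS.deg_act, Λ.deg_src]) hc2).symm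

/-- for `E ∈ E(S_{G,Λ})` and `F ∈ S_{G,Λ}`, `E ≤ F` (i.e. `FE=E`)
iff for every `(μ,e_G,μ) ∈ E` there is a unique triple of the form
`(ξ,g,ξ) ∈ F` with `{(μ,e_G,μ)} ≤ {(ξ,g,ξ)}`. -/
theorem stmt7 (SS : SelfSimilar k G Λ) (hfa : Λ.FinitelyAligned)
    (F E : Set (Λ.Path × G × Λ.Path)) (hF : IsElem SS F) (hE : IsIdem SS E) :
    smul SS F E = E ↔
      ∀ t ∈ E, ∃! p : Λ.Path × G,
        (p.1, p.2, p.1) ∈ F ∧ leS SS (iota Λ G t.1) {(p.1, p.2, p.1)} := by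
  have hdiag := diag_of_isIdem SS hE
  obtain ⟨hFfin, hFsrc, hForth⟩ := hF
  constructor
  · intro hFE t ht
    obtain ⟨μ0, g0, ν0⟩ := t
    have hg0 : g0 = 1 := (hdiag _ ht).1
    have hν0 : ν0 = μ0 := (hdiag _ ht).2
    subst g0; subst ν0
    have ht' : (μ0, (1:G), μ0) ∈ smul SS F E := hFE.symm ▸ ht
    simp only [smul, Set.mem_setOf_eq] at ht'
    obtain ⟨μ₁, g, ν₁, ξ₂, h₂, η₂, α, β, hm1, hm2, hab, hc1, hc2, hteq⟩ := ht'
    have hh2 : h₂ = 1 := (hdiag _ hm2).1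
    have hη2 : η₂ = ξ₂ := (hdiag _ hm2).2
    subst h₂; subst η₂
    obtain ⟨ha1, ha2, habeq, habd⟩ := hab
    dsimp only at ha1 ha2 habeq habd
    obtain ⟨e1, e2, e3⟩ : μ0 = Λ.comp μ₁ (SS.act g α) hc1 ∧
        (1:G) = SS.φ g α * SS.φ 1 (SS.act 1⁻¹ β) ∧
        μ0 = Λ.comp ξ₂ (SS.act 1⁻¹ β) hc2 := by simpa [Prod.mk.injEq] using hteq
    have hβ' : SS.act 1⁻¹ β = β := by rw [inv_one, SS.act_one]
    have hc2' : Λ.src ξ₂ = Λ.rng β := by rw [← hβ']; exact hc2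
    have e3' : μ0 = Λ.comp ξ₂ β hc2' := by rw [e3]; exact comp_congr rfl hβ' _ _
    have e4 : μ0 = Λ.comp ν₁ α ha1 := by rw [e3']; exact habeq.symm
    have hd14 : Λ.deg μ₁ = Λ.deg ν₁ := by
      have d1 := Λ.deg_comp μ₁ (SS.act g α) hc1
      have d2 := Λ.deg_comp ν₁ α ha1
      rw [← e1] at d1
      rw [← e4] at d2
      rw [SS.deg_act] at d1
      exact add_right_cancel (d1.symm.trans d2)
    obtain ⟨eμν, eact⟩ := comp_inj hd14 (e1.symm.trans e4)
    subst ν₁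
    have hφα : SS.φ g α = 1 := by rw [phi_one, mul_one] at e2; exact e2.symm
    refine ⟨(μ₁, g), ⟨hm1, ?_⟩, ?_⟩
    · exact (leS_iota_iff SS μ0 μ₁ g).mpr ⟨α, ha1, eact, hφα, e4⟩
    · rintro ⟨ξ', g'⟩ ⟨hm', hle'⟩
      rw [leS_iota_iff] at hle'
      obtain ⟨τ', hτ'r, hτ'a, hτ'φ, hτ'eq⟩ := hle'
      by_contra hne
      have hneq : (ξ', g', ξ') ≠ (μ₁, g, μ₁) := by
        intro hcon
        rw [Prod.mk.injEq, Prod.mk.injEq] at hcon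
        exact hne (Prod.ext hcon.1 hcon.2.1)
      have hemp : Λ.lmin ξ' μ₁ = ∅ := (hForth _ hm' _ hm1 hneq).1
      have hnon : (Λ.lmin ξ' μ₁).Nonempty :=
        lmin_nonempty hτ'r ha1 (hτ'eq.symm.trans e4)
      rw [hemp] at hnon
      exact Set.not_nonempty_empty hnon
  · intro hyp
    apply Set.Subset.antisymm
    · rintro u hu
      simp only [smul, Set.mem_setOf_eq] at hu
      obtain ⟨μ₁, g, ν₁, ξ₂, h₂, η₂, α, β, hm1, hm2, hab, hc1, hc2, rfl⟩ := hu
      have hh2 : h₂ = 1 := (hdiag _ hm2).1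
      have hη2 : η₂ = ξ₂ := (hdiag _ hm2).2
      subst h₂; subst η₂
      obtain ⟨⟨ξ, g₀⟩, ⟨hmF, hleF⟩, -⟩ := hyp (ξ₂, 1, ξ₂) hm2
      rw [leS_iota_iff] at hleF
      obtain ⟨τ, hτr, hτa, hτφ, hτeq⟩ := hleF
      have hτeq' : ξ₂ = Λ.comp ξ τ hτr := hτeq
      obtain ⟨ha1, ha2, habeq, habd⟩ := hab
      dsimp only at ha1 ha2 habeq habd
      have h3 : Λ.src τ = Λ.rng β := by
        have hsc := Λ.src_comp ξ τ hτr
        rw [← hτeq'] at hsc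
        rw [← hsc]; exact ha2
      have h4 : Λ.src ξ = Λ.rng (Λ.comp τ β h3) := by rw [Λ.rng_comp]; exact hτr
      have hext : Λ.comp ν₁ α ha1 = Λ.comp ξ (Λ.comp τ β h3) h4 := by
        rw [habeq]
        have hsc2 : Λ.src (Λ.comp ξ τ hτr) = Λ.rng β := by rw [Λ.src_comp]; exact h3
        have hx : Λ.comp ξ₂ β ha2 = Λ.comp (Λ.comp ξ τ hτr) β hsc2 :=
          comp_congr hτeq' rfl _ _
        rw [hx]
        exact Λ.comp_assoc ξ τ β hτr hsc2 h3 h4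
      have hnon := lmin_nonempty ha1 h4 hext
      have e : (μ₁, g, ν₁) = (ξ, g₀, ξ) := by
        by_contra hne
        have hemp : Λ.lmin ν₁ ξ = ∅ := (hForth _ hm1 _ hmF hne).2
        rw [hemp] at hnon
        exact Set.not_nonempty_empty hnon
      obtain ⟨eμ, eg, eν⟩ : μ₁ = ξ ∧ g = g₀ ∧ ν₁ = ξ := by
        simpa [Prod.mk.injEq] using e
      subst μ₁; subst g; subst ν₁
      have hdξ₂ : Λ.deg ξ₂ = Λ.deg ξ + Λ.deg τ := by
        rw [hτeq']; exact Λ.deg_comp ξ τ hτr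
      have hξle : Λ.deg ξ ≤ Λ.deg ξ₂ := by rw [hdξ₂]; exact le_self_add
      rw [sup_eq_right.mpr hξle, hdξ₂] at habd
      have hdα : Λ.deg α = Λ.deg τ := add_left_cancel habd
      have hdβ : Λ.deg β = 0 := by
        have hh := Λ.deg_comp ξ α ha1
        rw [habeq, Λ.deg_comp, hdα, ← hdξ₂] at hh
        have h0 : Λ.deg ξ₂ + Λ.deg β = Λ.deg ξ₂ + 0 := by rw [add_zero]; exact hh
        exact add_left_cancel h0
      have hcβ : Λ.comp ξ₂ β ha2 = ξ₂ := comp_vtx ξ₂ β hdβ ha2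
      have hατ : α = τ := by
        have hx : Λ.comp ξ α ha1 = Λ.comp ξ τ hτr := by rw [habeq, hcβ]; exact hτeq'
        exact (comp_inj rfl hx).2
      subst α
      have c1 : Λ.comp ξ (SS.act g₀ τ) hc1 = ξ₂ :=
        (comp_congr rfl hτa hc1 hτr).trans hτeq'.symm
      have c2 : SS.φ g₀ τ * SS.φ 1 (SS.act 1⁻¹ β) = 1 := by
        rw [hτφ, phi_one, one_mul]
      have c3 : Λ.comp ξ₂ (SS.act 1⁻¹ β) hc2 = ξ₂ :=
        comp_vtx _ _ (by rw [SS.deg_act]; exact hdβ) hc2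
      have hfin : (Λ.comp ξ (SS.act g₀ τ) hc1, SS.φ g₀ τ * SS.φ 1 (SS.act 1⁻¹ β),
          Λ.comp ξ₂ (SS.act 1⁻¹ β) hc2) = (ξ₂, (1:G), ξ₂) := by rw [c1, c2, c3]
      rw [hfin]
      exact hm2
    · rintro ⟨μ0, g0, ν0⟩ ht
      have hg0 : g0 = 1 := (hdiag _ ht).1
      have hν0 : ν0 = μ0 := (hdiag _ ht).2
      subst g0; subst ν0
      obtain ⟨⟨ξ, g₀⟩, ⟨hmF, hleF⟩, -⟩ := hyp (μ0, 1, μ0) ht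
      rw [leS_iota_iff] at hleF
      obtain ⟨τ, hτr, hτa, hτφ, hτeq⟩ := hleF
      have hτeq' : μ0 = Λ.comp ξ τ hτr := hτeq
      have hdμ : Λ.deg μ0 = Λ.deg ξ + Λ.deg τ := by
        rw [hτeq']; exact Λ.deg_comp ξ τ hτr
      have hξμ : Λ.deg ξ ≤ Λ.deg μ0 := by rw [hdμ]; exact le_self_add
      have hv : Λ.src μ0 = Λ.rng (Λ.src μ0) := (Λ.rng_vtx _ (Λ.deg_src μ0)).symm
      have hlm : (τ, Λ.src μ0) ∈ Λ.lmin ξ μ0 := by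
        refine ⟨hτr, hv, ?_, ?_⟩
        · show Λ.comp ξ τ hτr = Λ.comp μ0 (Λ.src μ0) hv
          rw [Λ.comp_src_id]; exact hτeq'.symm
        · show Λ.deg ξ + Λ.deg τ = Λ.deg ξ ⊔ Λ.deg μ0
          rw [sup_eq_right.mpr hξμ, hdμ]
      have hc1 : Λ.src ξ = Λ.rng (SS.act g₀ τ) := by rw [hτa]; exact hτr
      have hc2 : Λ.src μ0 = Λ.rng (SS.act 1⁻¹ (Λ.src μ0)) := by
        rw [inv_one, SS.act_one]; exact hv
      refine ⟨ξ, g₀, ξ, μ0, 1, μ0, τ, Λ.src μ0, hmF, ht, hlm, hc1, hc2, ?_⟩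
      rw [Prod.mk.injEq, Prod.mk.injEq]
      refine ⟨?_, ?_, ?_⟩
      · exact ((comp_congr rfl hτa hc1 hτr).trans hτeq'.symm).symm
      · rw [hτφ, phi_one, one_mul]
      · exact (comp_vtx μ0 _ (by rw [SS.deg_act, Λ.deg_src]) hc2).symm
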